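/- Let K be a field with fixed algebraic closure K̄ and let Z be a scheme of finite type over K. Assume that for every prime number p there exists an algebraic separable extension K_p of K inside K̄ such that every finite intermediate field F with K ⊆ F ⊆ K_p has degree [F:K] prime to p, and such that gcd{[M:K_p] : M a finite extension of K_p inside K̄ with Z(M) ≠ ∅} = 1. Then gcd{[L:K] : L a finite extension of K inside K̄ with Z(L) ≠ ∅} = 1; that is, Z admits a zero-cycle of degree 1 over K. -/

import Mathlib

open AlgebraicGeometry CategoryTheory

universe u

set_option synthInstance.maxHeartbeats 1000000
set_option maxHeartbeats 2000000

/-- `D ⊆ ℕ` has greatest common divisor `1`, expressed by the existence of a finite subset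
whose gcd is `1`. -/
def HasGcdOne (D : Set ℕ) : Prop :=
  ∃ s : Finset ℕ, ↑s ⊆ D ∧ s.gcd id = 1

/-- For a scheme `Z` over `Spec K` (via `fZ`) and a commutative ring `M` equipped with a ring
homomorphism `φ : K →+* M`, this says that `Z` has an `M`-point over `K`, i.e. there is a
morphism `Spec M ⟶ Z` of schemes over `Spec K`. -/
def HasPointOver {K : Type u} [CommRing K] {Z : Scheme.{u}}
    (fZ : Z ⟶ Spec (CommRingCat.of K)) (M : Type u) [CommRing M] (φ : K →+* M) : Prop :=
  ∃ g : Spec (CommRingCat.of M) ⟶ Z, g ≫ fZ = Spec.map (CommRingCat.ofHom φ)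

lemma Statement11Aux.hasGcdOne_of_forall_prime {D : Set ℕ} (h0 : ∃ n ∈ D, 0 < n)
    (h : ∀ p : ℕ, p.Prime → ∃ n ∈ D, ¬ p ∣ n) : HasGcdOne D := by
  classical
  obtain ⟨n0, hn0D, hn0⟩ := h0
  suffices H : ∀ g : ℕ, ∀ s : Finset ℕ, ↑s ⊆ D → s.gcd id = g → 0 < g → HasGcdOne D by
    refine H (({n0} : Finset ℕ).gcd id) {n0} ?_ rfl ?_
    · intro x hx
      simp only [Finset.coe_singleton, Set.mem_singleton_iff] at hx
      exact hx ▸ hn0D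
    · simpa [Finset.gcd_singleton] using hn0
  intro g
  induction g using Nat.strong_induction_on with
  | _ g IH =>
    intro s hsD hg hpos
    by_cases h1 : g = 1
    · exact ⟨s, hsD, h1 ▸ hg⟩
    · obtain ⟨p, hp, hpg⟩ := Nat.exists_prime_and_dvd h1
      obtain ⟨n, hnD, hpn⟩ := h p hp
      have hs'D : ↑(insert n s) ⊆ D := by
        intro x hx
        simp only [Finset.coe_insert, Set.mem_insert_iff] at hx
        rcases hx with rfl | hx
        · exact hnD
        · exact hsD hx
      have hgcd : (insert n s).gcd id = Nat.gcd n g := by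
        rw [Finset.gcd_insert, hg]; rfl
      have hdvd : Nat.gcd n g ∣ g := Nat.gcd_dvd_right n g
      have hne : Nat.gcd n g ≠ g := fun hEq =>
        hpn ((hEq ▸ hpg).trans (Nat.gcd_dvd_left n g))
      have hlt : Nat.gcd n g < g := lt_of_le_of_ne (Nat.le_of_dvd hpos hdvd) hne
      have hpos' : 0 < Nat.gcd n g := Nat.gcd_pos_of_pos_right _ hpos
      exact IH _ hlt (insert n s) hs'D hgcd hpos'

namespace Statement11Aux

open IntermediateField

variable {K : Type u} [Field K]

/-- Adjoining a finitely generated intermediate field to a bigger base. -/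
lemma adjoin_finset_eq {Ω : Type u} [Field Ω] [Algebra K Ω]
    (P : IntermediateField K Ω) (L : IntermediateField K Ω) (s : Finset Ω)
    (hs : adjoin K (↑s : Set Ω) = L) :
    adjoin ↥P ((L : Set Ω)) = adjoin ↥P (↑s : Set Ω) := by
  apply le_antisymm
  · rw [adjoin_le_iff]
    intro x hx
    have h1 : L ≤ restrictScalars K (adjoin ↥P (↑s : Set Ω)) := by
      rw [← hs, restrictScalars_adjoin_eq_sup]
      exact le_sup_right
    exact h1 hx
  · exact adjoin.mono _ _ _ (by rw [← hs]; exact subset_adjoin K _)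

/-- `relfinrank` via a construction over the bigger base. -/
lemma relfinrank_restrict {Ω : Type u} [Field Ω] [Algebra K Ω]
    (F : IntermediateField K Ω) (X : IntermediateField ↥F Ω) :
    F.relfinrank (X.restrictScalars K) = Module.finrank ↥F ↥X := by
  have h : F ≤ X.restrictScalars K := fun x hx => X.algebraMap_mem ⟨x, hx⟩
  rw [relfinrank_eq_finrank_of_le h]
  have : extendScalars h = X :=
    restrictScalars_injective K (extendScalars_restrictScalars h)
  rw [this]

lemma exists_finset_adjoin_eq {Ω : Type u} [Field Ω] [Algebra K Ω]
    (L : IntermediateField K Ω) [FiniteDimensional K ↥L] :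
    ∃ s : Finset Ω, (↑s : Set Ω) ⊆ (L : Set Ω) ∧ adjoin K (↑s : Set Ω) = L := by
  classical
  set B := Module.finBasis K ↥L with hB
  set v : Fin (Module.finrank K ↥L) → Ω := fun i => ((B i : ↥L) : Ω) with hv
  have hvL : ∀ i, v i ∈ L := fun i => (B i).2
  refine ⟨Finset.univ.image v, ?_, ?_⟩
  · intro y hy
    simp only [Finset.coe_image, Set.mem_image] at hy
    obtain ⟨i, -, rfl⟩ := hy
    exact hvL i
  · apply le_antisymm
    · rw [adjoin_le_iff]
      intro y hy
      simp only [Finset.coe_image, Set.mem_image] at hy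
      obtain ⟨i, -, rfl⟩ := hy
      exact hvL i
    · intro x hx
      have h0 := congrArg L.val.toLinearMap (B.sum_repr ⟨x, hx⟩)
      rw [map_sum] at h0
      have h0' : (∑ i, L.val.toLinearMap ((B.repr ⟨x, hx⟩) i • B i)) = x := h0
      have hx2 : x ∈ Submodule.span K (Set.range v) := by
        rw [← h0']
        refine Submodule.sum_mem _ fun i _ => ?_
        rw [map_smul]
        exact Submodule.smul_mem _ _ (Submodule.subset_span ⟨i, rfl⟩)
      have hx3 : x ∈ Algebra.adjoin K (Set.range v) := Algebra.span_le_adjoin K _ hx2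
      have hx4 : x ∈ Algebra.adjoin K (↑(Finset.univ.image v) : Set Ω) := by
        have : Set.range v = (↑(Finset.univ.image v) : Set Ω) := by
          simp [Finset.coe_image]
        rwa [this] at hx3
      exact IntermediateField.algebra_adjoin_le_adjoin K _ hx4
lemma exists_good_F {Ω : Type u} [Field Ω] [Algebra K Ω] [Algebra.IsAlgebraic K Ω]
    (Kp L : IntermediateField K Ω) [FiniteDimensional K ↥L] :
    ∃ F : IntermediateField K Ω, F ≤ Kp ∧ FiniteDimensional K ↥F ∧
      FiniteDimensional K ↥(L ⊔ F) ∧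
      Module.finrank K ↥(L ⊔ F) =
        Module.finrank K ↥F * Module.finrank ↥Kp ↥(adjoin ↥Kp (L : Set Ω)) := by
  classical
  have hint : ∀ x : Ω, IsIntegral K x := fun x => (Algebra.IsAlgebraic.isAlgebraic x).isIntegral
  obtain ⟨s, hsL, hs⟩ := exists_finset_adjoin_eq L
  -- N over Kp
  set N : IntermediateField ↥Kp Ω := adjoin ↥Kp (L : Set Ω) with hN
  have hNs : N = adjoin ↥Kp (↑s : Set Ω) := adjoin_finset_eq Kp L s hs
  haveI hNfin : FiniteDimensional ↥Kp ↥N := by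
    rw [hNs]
    haveI : Finite (↑s : Set Ω) := s.finite_toSet
    exact finiteDimensional_adjoin fun x _ => (hint x).tower_top
  set d := Module.finrank ↥Kp ↥N with hd
  set b : Module.Basis (Fin d) ↥Kp ↥N := Module.finBasis ↥Kp ↥N with hbdef
  set b' : Fin d → Ω := fun i => ((b i : ↥N) : Ω) with hb'
  have hsN : ∀ x ∈ s, x ∈ N := by
    intro x hx
    rw [hNs]
    exact subset_adjoin _ _ hx
  -- the coefficient function
  set coeff : ↥N → Fin d → Ω := fun z k => ((b.repr z k : ↥Kp) : Ω) with hcoeff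
  -- the coefficient set
  set C : Set Ω :=
    (⋃ (i : Fin d) (j : Fin d) (k : Fin d), {coeff (b i * b j) k}) ∪
    ((⋃ (x : {y : Ω // y ∈ s}) (k : Fin d), {coeff ⟨x.1, hsN x.1 x.2⟩ k}) ∪
      (⋃ (k : Fin d), {coeff 1 k})) with hC
  have hCfin : C.Finite := by
    refine Set.Finite.union ?_ (Set.Finite.union ?_ ?_)
    · exact Set.finite_iUnion fun _ => Set.finite_iUnion fun _ =>
        Set.finite_iUnion fun _ => Set.finite_singleton _
    · exact Set.finite_iUnion fun _ => Set.finite_iUnion fun _ => Set.finite_singleton _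
    · exact Set.finite_iUnion fun _ => Set.finite_singleton _
  have hCKp : ∀ x ∈ C, x ∈ Kp := by
    have hmem : ∀ (z : ↥N) (k : Fin d), coeff z k ∈ Kp := fun z k => (b.repr z k).2
    intro x hx
    rcases hx with hx | hx | hx
    · obtain ⟨i, hi⟩ := Set.mem_iUnion.1 hx
      obtain ⟨j, hj⟩ := Set.mem_iUnion.1 hi
      obtain ⟨k, hk⟩ := Set.mem_iUnion.1 hj
      rw [Set.mem_singleton_iff.1 hk]; apply hmem
    · obtain ⟨y, hy⟩ := Set.mem_iUnion.1 hx
      obtain ⟨k, hk⟩ := Set.mem_iUnion.1 hy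
      rw [Set.mem_singleton_iff.1 hk]; apply hmem
    · obtain ⟨k, hk⟩ := Set.mem_iUnion.1 hx
      rw [Set.mem_singleton_iff.1 hk]; apply hmem
  set F : IntermediateField K Ω := adjoin K C with hF
  have hFKp : F ≤ Kp := adjoin_le_iff.2 hCKp
  haveI hFfin : FiniteDimensional K ↥F := by
    haveI : Finite ↥C := hCfin.to_subtype
    exact finiteDimensional_adjoin fun x _ => hint x
  have hCF : ∀ x ∈ C, x ∈ F := fun x hx => subset_adjoin K C hx
  have hexp : ∀ z : ↥N, (z : Ω) = ∑ k, coeff z k * b' k := by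
    intro z
    have h0 := congrArg N.val.toLinearMap (b.sum_repr z)
    rw [map_sum] at h0
    have h0' : (∑ k, N.val.toLinearMap ((b.repr z) k • b k)) = (z : Ω) := h0
    rw [← h0']
    refine Finset.sum_congr rfl fun k _ => ?_
    rw [map_smul]
    rfl
  have hspanF : ∀ z : ↥N, (∀ k, coeff z k ∈ F) →
      (z : Ω) ∈ Submodule.span ↥F (Set.range b') := by
    intro z hz
    rw [hexp z]
    refine Submodule.sum_mem _ fun k _ => ?_
    have heq : coeff z k * b' k = (⟨coeff z k, hz k⟩ : ↥F) • b' k := rfl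
    rw [heq]
    exact Submodule.smul_mem _ _ (Submodule.subset_span ⟨k, rfl⟩)
  set S : Submodule ↥F Ω := Submodule.span ↥F (Set.range b') with hS
  have hij : ∀ i j : Fin d, ((b i * b j : ↥N) : Ω) ∈ S := by
    intro i j
    refine hspanF _ fun k => hCF _ ?_
    exact Set.mem_union_left _
      (Set.mem_iUnion.2 ⟨i, Set.mem_iUnion.2 ⟨j, Set.mem_iUnion.2 ⟨k, rfl⟩⟩⟩)
  have hone : (1 : Ω) ∈ S := by
    have h1 : ((1 : ↥N) : Ω) = (1 : Ω) := rfl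
    rw [← h1]
    refine hspanF _ fun k => hCF _ ?_
    exact Set.mem_union_right _ (Set.mem_union_right _ (Set.mem_iUnion.2 ⟨k, rfl⟩))
  have hsS : ∀ x ∈ s, x ∈ S := by
    intro x hx
    have h1 : ((⟨x, hsN x hx⟩ : ↥N) : Ω) = x := rfl
    rw [← h1]
    refine hspanF _ fun k => hCF _ ?_
    exact Set.mem_union_right _ (Set.mem_union_left _
      (Set.mem_iUnion.2 ⟨⟨x, hx⟩, Set.mem_iUnion.2 ⟨k, rfl⟩⟩))
  have hmulS : ∀ x y : Ω, x ∈ S → y ∈ S → x * y ∈ S := by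
    have h2 : S * S ≤ S := by
      rw [hS, Submodule.span_mul_span, Submodule.span_le]
      rintro _ ⟨_, ⟨i, rfl⟩, _, ⟨j, rfl⟩, rfl⟩
      exact hij i j
    exact fun x y hx hy => h2 (Submodule.mul_mem_mul hx hy)
  set NF : IntermediateField ↥F Ω := adjoin ↥F (L : Set Ω) with hNF
  have hNFs : NF = adjoin ↥F (↑s : Set Ω) := adjoin_finset_eq F L s hs
  haveI hNFfin : FiniteDimensional ↥F ↥NF := by
    rw [hNFs]
    haveI : Finite (↑s : Set Ω) := s.finite_toSet
    exact finiteDimensional_adjoin fun x _ => (hint x).tower_top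
  set m := Module.finrank ↥F ↥NF with hm
  have hmd : m ≤ d := by
    have halg : NF.toSubalgebra = Algebra.adjoin ↥F (↑s : Set Ω) := by
      rw [hNFs]
      exact adjoin_toSubalgebra_of_isAlgebraic fun x _ => ((hint x).tower_top).isAlgebraic
    have hsub : NF.toSubalgebra ≤ S.toSubalgebra hone hmulS := by
      rw [halg]
      exact Algebra.adjoin_le hsS
    have hsub2 : Subalgebra.toSubmodule NF.toSubalgebra ≤ S := hsub
    haveI : Module.Finite ↥F ↥S := FiniteDimensional.span_of_finite ↥F (Set.finite_range b')
    haveI : Fintype ↥(Set.range b') := Set.fintypeRange b'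
    calc m = Module.finrank ↥F ↥(Subalgebra.toSubmodule NF.toSubalgebra) := rfl
      _ ≤ Module.finrank ↥F ↥S := Submodule.finrank_mono hsub2
      _ ≤ (Set.range b').toFinset.card := finrank_span_le_card (Set.range b')
      _ ≤ d := by
          rw [Set.toFinset_range]
          exact (Finset.card_image_le).trans (by simp)
  have hdm : d ≤ m := by
    set c : Module.Basis (Fin m) ↥F ↥NF := Module.finBasis ↥F ↥NF with hcdef
    set c' : Fin m → Ω := fun i => ((c i : ↥NF) : Ω) with hc'
    set T : Submodule ↥Kp Ω := Submodule.span ↥Kp (Set.range c') with hT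
    have hNFT : ∀ z : ↥NF, (z : Ω) ∈ T := by
      intro z
      have h0 := congrArg NF.val.toLinearMap (c.sum_repr z)
      rw [map_sum] at h0
      have h0' : (∑ k, NF.val.toLinearMap ((c.repr z) k • c k)) = (z : Ω) := h0
      rw [← h0']
      refine Submodule.sum_mem _ fun k _ => ?_
      rw [map_smul]
      have hk : ((c.repr z k : ↥F) : Ω) ∈ Kp := hFKp (c.repr z k).2
      have heq : (c.repr z k) • NF.val.toLinearMap (c k)
          = (⟨((c.repr z k : ↥F) : Ω), hk⟩ : ↥Kp) • c' k := rfl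
      rw [heq]
      exact Submodule.smul_mem _ _ (Submodule.subset_span ⟨k, rfl⟩)
    have honeT : (1 : Ω) ∈ T := by
      have h1 : ((1 : ↥NF) : Ω) = (1 : Ω) := rfl
      rw [← h1]; exact hNFT 1
    have hmulT : ∀ x y : Ω, x ∈ T → y ∈ T → x * y ∈ T := by
      have h2 : T * T ≤ T := by
        rw [hT, Submodule.span_mul_span, Submodule.span_le]
        rintro _ ⟨_, ⟨i, rfl⟩, _, ⟨j, rfl⟩, rfl⟩
        exact hNFT (c i * c j)
      exact fun x y hx hy => h2 (Submodule.mul_mem_mul hx hy)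
    have halgN : N.toSubalgebra = Algebra.adjoin ↥Kp (↑s : Set Ω) := by
      rw [hNs]
      exact adjoin_toSubalgebra_of_isAlgebraic fun x _ => ((hint x).tower_top).isAlgebraic
    have hsubN : N.toSubalgebra ≤ T.toSubalgebra honeT hmulT := by
      rw [halgN]
      refine Algebra.adjoin_le fun x hx => ?_
      have hxNF : x ∈ NF := by rw [hNFs]; exact subset_adjoin _ _ hx
      exact hNFT ⟨x, hxNF⟩
    have hsub2 : Subalgebra.toSubmodule N.toSubalgebra ≤ T := hsubN
    haveI : Module.Finite ↥Kp ↥T := FiniteDimensional.span_of_finite ↥Kp (Set.finite_range c')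
    haveI : Fintype ↥(Set.range c') := Set.fintypeRange c'
    calc d = Module.finrank ↥Kp ↥(Subalgebra.toSubmodule N.toSubalgebra) := rfl
      _ ≤ Module.finrank ↥Kp ↥T := Submodule.finrank_mono hsub2
      _ ≤ (Set.range c').toFinset.card := finrank_span_le_card (Set.range c')
      _ ≤ m := by
          rw [Set.toFinset_range]
          exact (Finset.card_image_le).trans (by simp)
  have hmd' : m = d := le_antisymm hmd hdm
  haveI hsupfin : FiniteDimensional K ↥(L ⊔ F) := IntermediateField.finiteDimensional_sup L F
  refine ⟨F, hFKp, hFfin, hsupfin, ?_⟩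
  have hsup : L ⊔ F = restrictScalars K NF := by
    rw [hNF, restrictScalars_adjoin_eq_sup, adjoin_self, sup_comm]
  have h5 : F.relfinrank (L ⊔ F) = m := by rw [hsup, relfinrank_restrict]
  have h6 := IntermediateField.finrank_bot_mul_relfinrank (le_sup_right : F ≤ L ⊔ F)
  rw [← h6, h5, hmd']

end Statement11Aux
lemma Statement11Aux.descend (K : Type u) [Field K] (Z : Scheme.{u}) (fZ : Z ⟶ Spec (CommRingCat.of K))
    [LocallyOfFiniteType fZ] (M : Type u) [Field M] (φ : K →+* M)
    (j : M →+* AlgebraicClosure K) (hj : j.comp φ = algebraMap K (AlgebraicClosure K))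
    (hpt : HasPointOver fZ M φ) :
    ∃ L : IntermediateField K (AlgebraicClosure K), FiniteDimensional K L ∧
      (L : Set (AlgebraicClosure K)) ⊆ Set.range j ∧
      HasPointOver fZ L (algebraMap K L) := by
  obtain ⟨g, hg⟩ := hpt
  set x : Z := g.base default with hx
  obtain ⟨V, hxV⟩ : ∃ V : Z.affineOpens, x ∈ V.1 := by
    obtain ⟨_, ⟨V, hV, rfl⟩, hxV, -⟩ :=
      Z.isBasis_affineOpens.exists_subset_of_mem_open (Set.mem_univ x) isOpen_univ
    exact ⟨⟨V, hV⟩, hxV⟩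
  have hV : IsAffineOpen V.1 := V.2
  have hr : Set.range g.base ⊆ Set.range hV.fromSpec.base := by
    rw [hV.range_fromSpec]
    rintro _ ⟨y, rfl⟩
    have : y = default := Subsingleton.elim _ _
    rw [this]
    exact hxV
  set h : Spec (CommRingCat.of M) ⟶ Spec Γ(Z, V.1) := IsOpenImmersion.lift hV.fromSpec g hr
    with hh
  have hfac : h ≫ hV.fromSpec = g := IsOpenImmersion.lift_fac _ _ hr
  set ψ : Γ(Z, V.1) ⟶ CommRingCat.of M := Spec.preimage h with hψ
  have hψmap : Spec.map ψ = h := Spec.map_preimage h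
  have e : V.1 ≤ fZ ⁻¹ᵁ (⊤ : (Spec (CommRingCat.of K)).Opens) := le_top
  have hft : RingHom.FiniteType (fZ.appLE ⊤ V.1 e).hom :=
    LocallyOfFiniteType.finiteType_of_affine_subset fZ (isAffineOpen_top _) V.2 e
  set θ : CommRingCat.of K ⟶ Γ(Z, V.1) :=
    (Scheme.ΓSpecIso (CommRingCat.of K)).inv ≫ fZ.appLE ⊤ V.1 e with hθ
  have hkey : hV.fromSpec ≫ fZ = Spec.map θ := by
    have h2 := IsAffineOpen.SpecMap_appLE_fromSpec fZ (isAffineOpen_top _) hV e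
    rw [← h2, IsAffineOpen.fromSpec_top, Scheme.isoSpec_Spec_inv, ← Spec.map_comp, hθ]
  -- θ is finite type as a ring hom K →+* Γ(Z, V.1)
  have hθft : RingHom.FiniteType θ.hom := by
    have h1 : Function.Surjective (Scheme.ΓSpecIso (CommRingCat.of K)).inv.hom :=
      (ConcreteCategory.bijective_of_isIso (Scheme.ΓSpecIso (CommRingCat.of K)).inv).2
    exact RingHom.FiniteType.comp hft (RingHom.FiniteType.of_surjective _ h1)
  -- the composite θ ≫ ψ is φ
  have hcomp : ψ.hom.comp θ.hom = φ := by
    have : Spec.map (θ ≫ ψ) = Spec.map (CommRingCat.ofHom φ) := by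
      rw [Spec.map_comp, hψmap, ← hg, ← hfac, Category.assoc, hkey]
    exact congrArg CommRingCat.Hom.hom (Spec.map_injective this)
  -- the map to the algebraic closure
  set σ : Γ(Z, V.1) →+* AlgebraicClosure K := j.comp ψ.hom with hσ
  have hσθ : σ.comp θ.hom = algebraMap K (AlgebraicClosure K) := by
    rw [hσ, RingHom.comp_assoc, hcomp, hj]
  letI : Algebra K Γ(Z, V.1) := θ.hom.toAlgebra
  haveI : Algebra.FiniteType K Γ(Z, V.1) := hθft
  obtain ⟨s, hs⟩ : ∃ s : Finset Γ(Z, V.1), Algebra.adjoin K (↑s : Set Γ(Z, V.1)) = ⊤ :=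
    Algebra.FiniteType.out
  let σa : Γ(Z, V.1) →ₐ[K] AlgebraicClosure K :=
    { toRingHom := σ, commutes' := fun r => RingHom.congr_fun hσθ r }
  set L : IntermediateField K (AlgebraicClosure K) :=
    IntermediateField.adjoin K (σ '' ↑s) with hL
  haveI : Finite ↥(σ '' (↑s : Set Γ(Z, V.1))) := (s.finite_toSet.image σ).to_subtype
  haveI hLfin : FiniteDimensional K L :=
    IntermediateField.finiteDimensional_adjoin fun x _ =>
      (Algebra.IsAlgebraic.isAlgebraic x).isIntegral
  have hmem : ∀ a, σ a ∈ L := by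
    intro a
    have ha : a ∈ Algebra.adjoin K (↑s : Set Γ(Z, V.1)) := hs ▸ trivial
    have : σa a ∈ (Algebra.adjoin K (↑s : Set Γ(Z, V.1))).map σa :=
      Subalgebra.mem_map.2 ⟨a, ha, rfl⟩
    rw [← Algebra.adjoin_image] at this
    exact IntermediateField.algebra_adjoin_le_adjoin K _ this
  set σ' : Γ(Z, V.1) →+* ↥L := σ.codRestrict L.toSubring hmem with hσ'
  refine ⟨L, hLfin, ?_, ?_⟩
  · -- L ⊆ range j
    have hsub : (⇑σ '' (↑s : Set Γ(Z, V.1))) ⊆ Set.range ⇑j := by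
      rintro _ ⟨a, -, rfl⟩; exact ⟨ψ a, rfl⟩
    let J : IntermediateField K (AlgebraicClosure K) :=
      { j.fieldRange with
        algebraMap_mem' := fun r => ⟨φ r, by rw [← hj]; rfl⟩ }
    have hLJ : L ≤ J := IntermediateField.adjoin_le_iff.2 hsub
    intro y hy
    exact RingHom.mem_fieldRange.1 (hLJ hy)
  · refine ⟨Spec.map (CommRingCat.ofHom σ') ≫ hV.fromSpec, ?_⟩
    rw [Category.assoc, hkey, ← Spec.map_comp]
    congr 1
    have h5 : (algebraMap ↥L (AlgebraicClosure K)).comp (σ' : Γ(Z, V.1) →+* ↥L) = σ := rfl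
    have hval : (algebraMap ↥L (AlgebraicClosure K)).comp
        ((σ' : Γ(Z, V.1) →+* ↥L).comp θ.hom)
        = algebraMap K (AlgebraicClosure K) := by
      rw [← RingHom.comp_assoc, h5, hσθ]
    have : (σ' : Γ(Z, V.1) →+* ↥L).comp θ.hom = algebraMap K ↥L := by
      ext r
      have h6 := RingHom.congr_fun hval r
      simp only [RingHom.comp_apply] at h6 ⊢
      exact h6.trans (IsScalarTower.algebraMap_apply K (↥L) (AlgebraicClosure K) r)
    show θ ≫ CommRingCat.ofHom σ' = CommRingCat.ofHom (algebraMap K ↥L)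
    exact CommRingCat.hom_ext this
lemma Statement11Aux.point_mono {K : Type u} [Field K] {Z : Scheme.{u}} {fZ : Z ⟶ Spec (CommRingCat.of K)}
    {L E : IntermediateField K (AlgebraicClosure K)} (hLE : L ≤ E)
    (hpt : HasPointOver fZ L (algebraMap K L)) : HasPointOver fZ E (algebraMap K E) := by
  obtain ⟨g, hg⟩ := hpt
  set ι : ↥L →+* ↥E := (IntermediateField.inclusion hLE : ↥L →ₐ[K] ↥E).toRingHom with hι
  refine ⟨Spec.map (CommRingCat.ofHom ι) ≫ g, ?_⟩
  have hc : (CommRingCat.ofHom (algebraMap K ↥L)) ≫ (CommRingCat.ofHom ι)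
      = CommRingCat.ofHom (algebraMap K ↥E) := by
    refine CommRingCat.hom_ext ?_
    show ι.comp (algebraMap K ↥L) = algebraMap K ↥E
    ext r
    exact congrArg Subtype.val ((IntermediateField.inclusion hLE).commutes r)
  rw [Category.assoc, hg, ← Spec.map_comp, hc]

/-- Let `K` be a field with fixed algebraic closure `K̄` and let `Z` be a scheme of finite type
over `K` (locally of finite type and quasi-compact over `Spec K`).  Assume that for every
prime `p` there is an algebraic separable extension `K_p` of `K` inside `K̄` such that every
finite intermediate field `F` with `K ⊆ F ⊆ K_p` has degree `[F : K]` prime to `p`, and such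
that `gcd {[M : K_p] : M/K_p finite inside K̄ with Z(M) ≠ ∅} = 1`.  Then
`gcd {[L : K] : L/K finite inside K̄ with Z(L) ≠ ∅} = 1`, i.e. `Z` admits a zero-cycle of
degree `1` over `K`. -/
theorem statement11 (K : Type u) [Field K]
    (Z : Scheme.{u}) (fZ : Z ⟶ Spec (CommRingCat.of K))
    [LocallyOfFiniteType fZ] [QuasiCompact fZ]
    (hSyl : ∀ p : ℕ, p.Prime →
      ∃ Kp : IntermediateField K (AlgebraicClosure K),
        Algebra.IsSeparable K Kp ∧
        (∀ F : IntermediateField K (AlgebraicClosure K), F ≤ Kp →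
          FiniteDimensional K F → (Module.finrank K F).Coprime p) ∧
        HasGcdOne {n | ∃ M : IntermediateField Kp (AlgebraicClosure K),
          FiniteDimensional Kp M ∧ n = Module.finrank Kp M ∧
          HasPointOver fZ M ((algebraMap Kp M).comp (algebraMap K Kp))}) :
    HasGcdOne {n | ∃ L : IntermediateField K (AlgebraicClosure K),
      FiniteDimensional K L ∧ n = Module.finrank K L ∧
      HasPointOver fZ L (algebraMap K L)} := by
  classical
  set Ω := AlgebraicClosure K with hΩ
  set D : Set ℕ := {n | ∃ L : IntermediateField K Ω,
      FiniteDimensional K L ∧ n = Module.finrank K L ∧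
      HasPointOver fZ L (algebraMap K L)} with hD
  have key : ∀ p : ℕ, p.Prime → ∃ n ∈ D, ¬ p ∣ n := by
    intro p hp
    obtain ⟨Kp, hsep, hdeg, hgcd⟩ := hSyl p hp
    obtain ⟨t, htsub, htgcd⟩ := hgcd
    have hex : ∃ n ∈ t, ¬ p ∣ n := by
      by_contra hcon
      push_neg at hcon
      have : p ∣ t.gcd id := Finset.dvd_gcd fun n hn => hcon n hn
      rw [htgcd] at this
      exact hp.ne_one (Nat.dvd_one.1 this)
    obtain ⟨n, hnt, hpn⟩ := hex
    obtain ⟨M, hMfin, hneq, hMpt⟩ := htsub hnt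
    -- descend the point over M to a finite extension L of K
    have hj : (algebraMap ↥M Ω).comp ((algebraMap ↥Kp ↥M).comp (algebraMap K ↥Kp))
        = algebraMap K Ω := by
      ext r
      simp only [RingHom.comp_apply]
      rw [← IsScalarTower.algebraMap_apply ↥Kp ↥M Ω, ← IsScalarTower.algebraMap_apply K ↥Kp Ω]
    obtain ⟨L, hLfin, hLsub, hLpt⟩ :=
      Statement11Aux.descend K Z fZ ↥M ((algebraMap ↥Kp ↥M).comp (algebraMap K ↥Kp))
        (algebraMap ↥M Ω) hj hMpt
    haveI := hLfin
    -- L lands inside M (as a subset of Ω)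
    have hLM : (L : Set Ω) ⊆ (M : Set Ω) := by
      intro x hx
      obtain ⟨y, rfl⟩ := hLsub hx
      exact y.2
    -- choose F
    obtain ⟨F, hFKp, hFfin, hLFfin, hLFrank⟩ := Statement11Aux.exists_good_F Kp L
    have hpt2 := Statement11Aux.point_mono (le_sup_left : L ≤ L ⊔ F) hLpt
    refine ⟨Module.finrank K ↥(L ⊔ F), ⟨L ⊔ F, hLFfin, rfl, hpt2⟩, ?_⟩
    rw [hLFrank]
    intro hdvd
    rcases (Nat.Prime.dvd_mul hp).1 hdvd with hcase | hcase
    · have hcop := hdeg F hFKp hFfin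
      have : p ∣ 1 := hcop ▸ Nat.dvd_gcd hcase dvd_rfl
      exact hp.ne_one (Nat.dvd_one.1 this)
    · -- p divides d = finrank Kp (adjoin Kp L), but d divides finrank Kp M = n and p ∤ n
      have h1 : Kp ≤ IntermediateField.restrictScalars K
          (IntermediateField.adjoin ↥Kp (L : Set Ω)) := by
        rw [IntermediateField.restrictScalars_adjoin_eq_sup, IntermediateField.adjoin_self]
        exact le_sup_left
      have h2 : IntermediateField.restrictScalars K (IntermediateField.adjoin ↥Kp (L : Set Ω))
          ≤ IntermediateField.restrictScalars K M := by
        rw [IntermediateField.restrictScalars_adjoin_eq_sup, IntermediateField.adjoin_self]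
        refine sup_le ?_ ?_
        · intro x hx
          exact M.algebraMap_mem ⟨x, hx⟩
        · intro x hx
          exact hLM hx
      have h3 := IntermediateField.relfinrank_mul_relfinrank h1 h2
      rw [Statement11Aux.relfinrank_restrict, Statement11Aux.relfinrank_restrict] at h3
      have hdn : Module.finrank ↥Kp ↥(IntermediateField.adjoin ↥Kp (L : Set Ω))
          ∣ Module.finrank ↥Kp ↥M := ⟨_, h3.symm⟩
      rw [hneq] at hpn
      exact hpn (hcase.trans hdn)
  have h0 : ∃ n ∈ D, 0 < n := by
    obtain ⟨n, hnD, -⟩ := key 2 Nat.prime_two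
    refine ⟨n, hnD, ?_⟩
    obtain ⟨L, hLfin, rfl, -⟩ := hnD
    haveI := hLfin
    exact Module.finrank_pos
  exact Statement11Aux.hasGcdOne_of_forall_prime h0 key
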